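/- Fundamental inequality of mixture mirror descent policy optimization: with mixture policy μ_t(y|x) ∝ π_t(y|x)^{1−η_t α} μ(y|x)^{η_t α} and update π_{t+1}(y|x_h) ∝ μ_t(y|x_h) exp(η_t Q_α^{μ_t,t}(x_h,y)), for any policy π and episode t: KL_p(π||π_{t+1}) ≤ (1 − η_t α) KL_p(π||π_t) + 2 η_t² E_{π,p}[ Σ_{h=1}^H ‖Q_α^{μ_t,t}(x_h,·)‖_∞² ] + η_t ( V_α^{μ_t,t}(x_1) − V_α^{π,t}(x_1) ). -/

import Mathlib

open Finset

variable {X Y : Type} [Fintype X] [Fintype Y] [DecidableEq X] [Nonempty Y]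

/-- Per-state KL divergence between action distributions. -/
noncomputable def klDist {Y : Type} [Fintype Y] (p q : Y → ℝ) : ℝ :=
  ∑ y, p y * Real.log (p y / q y)

/-- Probability of a path of `m` steps starting at state `x` at time `h`. -/
noncomputable def pathProb (p : ℕ → X → Y → X → ℝ) (π : ℕ → X → Y → ℝ)
    (h : ℕ) (x : X) (m : ℕ) (s : Fin (m + 1) → X) (a : Fin m → Y) : ℝ :=
  (if s 0 = x then (1 : ℝ) else 0) *
    ∏ i : Fin m, π (h + i) (s i.castSucc) (a i) * p (h + i) (s i.castSucc) (a i) (s i.succ)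

/-- The regularized value function `V_α^{π,t}(x_h)`: expected terminal reward minus
`α` times the accumulated per-state KL penalties w.r.t. the reference policy `μ`,
conditioned on being at state `x` at step `h`. -/
noncomputable def Vreg (p : ℕ → X → Y → X → ℝ) (π μ : ℕ → X → Y → ℝ) (r : X → ℝ)
    (α : ℝ) (H h : ℕ) (x : X) : ℝ :=
  ∑ s : Fin (H - h + 1) → X, ∑ a : Fin (H - h) → Y,
    pathProb p π h x (H - h) s a *
      (r (s (Fin.last (H - h))) -
        α * ∑ i : Fin (H - h), klDist (π (h + i) (s i.castSucc)) (μ (h + i) (s i.castSucc)))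

/-- The regularized Q-function `Q_α^{π,t}(x_h, y_h)`: as `Vreg` but additionally
conditioning on the first action `y` taken at step `h`. -/
noncomputable def Qreg (p : ℕ → X → Y → X → ℝ) (π μ : ℕ → X → Y → ℝ) (r : X → ℝ)
    (α : ℝ) (H h : ℕ) (x : X) (y : Y) : ℝ :=
  ∑ x' : X, p h x y x' *
    (∑ s : Fin (H - (h + 1) + 1) → X, ∑ a : Fin (H - (h + 1)) → Y,
      pathProb p π (h + 1) x' (H - (h + 1)) s a *
        (r (s (Fin.last (H - (h + 1)))) -
          α * (klDist (π h x) (μ h x) +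
            ∑ i : Fin (H - (h + 1)),
              klDist (π (h + 1 + i) (s i.castSucc)) (μ (h + 1 + i) (s i.castSucc)))))

/-- Trajectory-level KL divergence between two policies. -/
noncomputable def KLtraj (p : ℕ → X → Y → X → ℝ) (π π' : ℕ → X → Y → ℝ)
    (x1 : X) (H : ℕ) : ℝ :=
  ∑ s : Fin (H + 1) → X, ∑ a : Fin H → Y,
    pathProb p π 0 x1 H s a *
      Real.log (pathProb p π 0 x1 H s a / pathProb p π' 0 x1 H s a)

section Simplex
variable {Y : Type} [Fintype Y] [Nonempty Y]

lemma exists_pos_of_sum_one (q : Y → ℝ) (hq0 : ∀ y, 0 ≤ q y) (hq1 : ∑ y, q y = 1) :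
    ∃ y, 0 < q y := by
  by_contra hc
  push_neg at hc
  have : ∑ y, q y = 0 := Finset.sum_eq_zero fun y _ => le_antisymm (hc y) (hq0 y)
  rw [hq1] at this; norm_num at this

lemma klDist_nonneg' (q q' : Y → ℝ) (hq0 : ∀ y, 0 ≤ q y) (hq1 : ∑ y, q y = 1)
    (hq'0 : ∀ y, 0 ≤ q' y) (hq'1 : ∑ y, q' y ≤ 1)
    (hac : ∀ y, q' y = 0 → q y = 0) : 0 ≤ klDist q q' := by
  have key : ∀ y ∈ Finset.univ, q y - q' y ≤ q y * Real.log (q y / q' y) := by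
    intro y _
    rcases eq_or_lt_of_le (hq0 y) with h0 | h0
    · simp [← h0]; exact hq'0 y
    · have hq' : 0 < q' y := by
        rcases eq_or_lt_of_le (hq'0 y) with h1 | h1
        · exact absurd (hac y h1.symm) (by positivity)
        · exact h1
      have hlog : Real.log (q' y / q y) ≤ q' y / q y - 1 :=
        Real.log_le_sub_one_of_pos (div_pos hq' h0)
      have hinv : Real.log (q y / q' y) = -Real.log (q' y / q y) := by
        rw [← Real.log_inv]; congr 1; field_simp
      rw [hinv]
      have h2 : q y * (q' y / q y) = q' y := by field_simp
      nlinarith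
  have := Finset.sum_le_sum key
  rw [Finset.sum_sub_distrib, hq1] at this
  unfold klDist; linarith

lemma sup_abs_bound (δ : Y → ℝ) (y : Y) : |δ y| ≤ ⨆ y', |δ y'| :=
  le_ciSup (f := fun y' => |δ y'|) (Set.Finite.bddAbove (Set.finite_range _)) y

lemma sup_abs_nonneg (δ : Y → ℝ) : 0 ≤ ⨆ y', |δ y'| :=
  le_trans (abs_nonneg _) (sup_abs_bound δ (Classical.arbitrary Y))

lemma sum_exp_pos (q δ : Y → ℝ) (hq0 : ∀ y, 0 ≤ q y) (hq1 : ∑ y, q y = 1) :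
    0 < ∑ y, q y * Real.exp (δ y) := by
  obtain ⟨y0, hy0⟩ := exists_pos_of_sum_one q hq0 hq1
  exact Finset.sum_pos' (fun y _ => mul_nonneg (hq0 y) (Real.exp_pos _).le)
    ⟨y0, Finset.mem_univ y0, mul_pos hy0 (Real.exp_pos _)⟩

lemma logsumexp_le (q δ : Y → ℝ) (hq0 : ∀ y, 0 ≤ q y) (hq1 : ∑ y, q y = 1) :
    Real.log (∑ y, q y * Real.exp (δ y)) ≤ (∑ y, q y * δ y) + 2 * (⨆ y, |δ y|) ^ 2 := by
  set M := ⨆ y, |δ y| with hM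
  have hbdd : ∀ y, |δ y| ≤ M := sup_abs_bound δ
  have hM0 : 0 ≤ M := sup_abs_nonneg δ
  have hZ : 0 < ∑ y, q y * Real.exp (δ y) := sum_exp_pos q δ hq0 hq1
  have hlb : -M ≤ ∑ y, q y * δ y := by
    have : ∑ y, q y * (-M) ≤ ∑ y, q y * δ y := by
      apply Finset.sum_le_sum
      intro y _
      exact mul_le_mul_of_nonneg_left (neg_le_of_abs_le (hbdd y)) (hq0 y)
    calc -M = ∑ y, q y * (-M) := by rw [← Finset.sum_mul, hq1, one_mul]
      _ ≤ _ := this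
  by_cases hM1 : M ≤ 1
  · have hexp : ∀ y ∈ Finset.univ, q y * Real.exp (δ y) ≤ q y * (1 + δ y + M ^ 2) := by
      intro y _
      apply mul_le_mul_of_nonneg_left _ (hq0 y)
      have h1 : Real.exp (δ y) ≤ 1 + δ y + (δ y) ^ 2 := by
        have := abs_le.mp (Real.exp_bound (le_trans (hbdd y) hM1) (n := 2) (by norm_num))
        simp [Finset.sum_range_succ] at this
        nlinarith [sq_nonneg (δ y), this.2]
      have h2 : (δ y) ^ 2 ≤ M ^ 2 := by
        rw [← sq_abs]; exact pow_le_pow_left₀ (abs_nonneg _) (hbdd y) 2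
      linarith
    have hsum : ∑ y, q y * Real.exp (δ y) ≤ 1 + (∑ y, q y * δ y) + M ^ 2 := by
      calc ∑ y, q y * Real.exp (δ y) ≤ ∑ y, q y * (1 + δ y + M ^ 2) := Finset.sum_le_sum hexp
        _ = (∑ y, q y) + (∑ y, q y * δ y) + (∑ y, q y) * M ^ 2 := by
            simp [mul_add, Finset.sum_add_distrib, Finset.sum_mul]
        _ = 1 + (∑ y, q y * δ y) + M ^ 2 := by rw [hq1]; ring
    have := Real.log_le_sub_one_of_pos hZ
    nlinarith [sq_nonneg M]
  · push_neg at hM1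
    have hub : ∑ y, q y * Real.exp (δ y) ≤ Real.exp M := by
      have : ∀ y ∈ Finset.univ, q y * Real.exp (δ y) ≤ q y * Real.exp M := by
        intro y _
        exact mul_le_mul_of_nonneg_left
          (Real.exp_le_exp.mpr (le_trans (le_abs_self _) (hbdd y))) (hq0 y)
      calc ∑ y, q y * Real.exp (δ y) ≤ ∑ y, q y * Real.exp M := Finset.sum_le_sum this
        _ = Real.exp M := by rw [← Finset.sum_mul, hq1, one_mul]
    have hlog : Real.log (∑ y, q y * Real.exp (δ y)) ≤ M := by
      calc Real.log (∑ y, q y * Real.exp (δ y)) ≤ Real.log (Real.exp M) :=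
            Real.log_le_log hZ hub
        _ = M := Real.log_exp M
    nlinarith

lemma md_step (q pr δ : Y → ℝ) (hq0 : ∀ y, 0 ≤ q y) (hq1 : ∑ y, q y = 1)
    (hpr0 : ∀ y, 0 ≤ pr y) (hpr1 : ∑ y, pr y = 1)
    (hac : ∀ y, q y = 0 → pr y = 0)
    (qp : Y → ℝ)
    (hqp : ∀ y, qp y = q y * Real.exp (δ y) / ∑ y', q y' * Real.exp (δ y')) :
    klDist pr qp ≤ klDist pr q + (∑ y, (q y - pr y) * δ y) + 2 * (⨆ y, |δ y|) ^ 2 := by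
  set Z := ∑ y', q y' * Real.exp (δ y') with hZdef
  have hZ : 0 < Z := sum_exp_pos q δ hq0 hq1
  have key : ∀ y, pr y * Real.log (pr y / qp y)
      = pr y * Real.log (pr y / q y) - pr y * δ y + pr y * Real.log Z := by
    intro y
    rcases eq_or_lt_of_le (hpr0 y) with h0 | h0
    · simp [← h0]
    · have hqy : 0 < q y := by
        rcases eq_or_lt_of_le (hq0 y) with h1 | h1
        · exact absurd (hac y h1.symm) (by positivity)
        · exact h1
      have hqpy : qp y = q y * Real.exp (δ y) / Z := hqp y
      have h1 : pr y / qp y = (pr y / q y) * (Z / Real.exp (δ y)) := by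
        rw [hqpy]; field_simp; try ring
      rw [h1, Real.log_mul (by positivity) (by positivity),
        Real.log_div (ne_of_gt hZ) (ne_of_gt (Real.exp_pos _)), Real.log_exp]
      ring
  have hsum : klDist pr qp = klDist pr q - (∑ y, pr y * δ y) + Real.log Z := by
    unfold klDist
    calc ∑ y, pr y * Real.log (pr y / qp y)
        = ∑ y, (pr y * Real.log (pr y / q y) - pr y * δ y + pr y * Real.log Z) := by
          exact Finset.sum_congr rfl fun y _ => key y
      _ = (∑ y, pr y * Real.log (pr y / q y)) - (∑ y, pr y * δ y)
          + (∑ y, pr y) * Real.log Z := by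
          rw [Finset.sum_add_distrib, Finset.sum_sub_distrib, Finset.sum_mul]
      _ = _ := by rw [hpr1]; try ring
  have hlse := logsumexp_le q δ hq0 hq1
  have hsplit : ∑ y, (q y - pr y) * δ y = (∑ y, q y * δ y) - ∑ y, pr y * δ y := by
    rw [← Finset.sum_sub_distrib]; exact Finset.sum_congr rfl fun y _ => by ring
  rw [hsum, hsplit]; linarith

end Simplex

section Mixture
variable {Y : Type} [Fintype Y] [Nonempty Y]


lemma mixture_facts (β : ℝ) (hβ0 : 0 < β) (pt mu mt : Y → ℝ)
    (hpt0 : ∀ y, 0 ≤ pt y) (hpt1 : ∑ y, pt y = 1)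
    (hmu0 : ∀ y, 0 ≤ mu y)
    (hsupp : ∀ y, mu y = 0 → pt y = 0)
    (hmt : ∀ y, mt y = pt y ^ (1 - β) * mu y ^ β / ∑ y', pt y' ^ (1 - β) * mu y' ^ β) :
    (0 < ∑ y', pt y' ^ (1 - β) * mu y' ^ β) ∧ (∀ y, 0 ≤ mt y) ∧ (∑ y, mt y = 1) := by
  have hZ : 0 < ∑ y', pt y' ^ (1 - β) * mu y' ^ β := by
    obtain ⟨y0, hy0⟩ := exists_pos_of_sum_one pt hpt0 hpt1
    have hmu : 0 < mu y0 := by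
      rcases eq_or_lt_of_le (hmu0 y0) with h1 | h1
      · exact absurd (hsupp y0 h1.symm) (by positivity)
      · exact h1
    exact Finset.sum_pos'
      (fun y _ => mul_nonneg (Real.rpow_nonneg (hpt0 y) _) (Real.rpow_nonneg (hmu0 y) _))
      ⟨y0, Finset.mem_univ y0,
        mul_pos (Real.rpow_pos_of_pos hy0 _) (Real.rpow_pos_of_pos hmu _)⟩
  refine ⟨hZ, fun y => ?_, ?_⟩
  · rw [hmt y]
    exact div_nonneg (mul_nonneg (Real.rpow_nonneg (hpt0 y) _) (Real.rpow_nonneg (hmu0 y) _)) hZ.le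
  · have h : ∑ y, mt y = (∑ y, pt y ^ (1 - β) * mu y ^ β) / (∑ y', pt y' ^ (1 - β) * mu y' ^ β) := by
      rw [Finset.sum_div]
      exact Finset.sum_congr rfl fun y _ => hmt y
    rw [h, div_self (ne_of_gt hZ)]

lemma mixture_step (β : ℝ) (hβ0 : 0 < β) (hβ1 : β ≤ 1) (pt mu pr mt : Y → ℝ)
    (hpt0 : ∀ y, 0 ≤ pt y) (hpt1 : ∑ y, pt y = 1)
    (hmu0 : ∀ y, 0 ≤ mu y) (hmu1 : ∑ y, mu y = 1)
    (hpr0 : ∀ y, 0 ≤ pr y) (hpr1 : ∑ y, pr y = 1)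
    (hsupp : ∀ y, mu y = 0 → pt y = 0) (hac : ∀ y, pt y = 0 → pr y = 0)
    (hmt : ∀ y, mt y = pt y ^ (1 - β) * mu y ^ β / ∑ y', pt y' ^ (1 - β) * mu y' ^ β) :
    klDist pr mt ≤ (1 - β) * klDist pr pt + β * klDist pr mu - β * klDist mt mu := by
  obtain ⟨hZ, hmt0, hmt1⟩ := mixture_facts β hβ0 pt mu mt hpt0 hpt1 hmu0 hsupp hmt
  set Z := ∑ y', pt y' ^ (1 - β) * mu y' ^ β with hZdef
  -- Identity A
  have identA : klDist pr mt
      = (1 - β) * klDist pr pt + β * klDist pr mu + Real.log Z := by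
    have key : ∀ y, pr y * Real.log (pr y / mt y)
        = (1 - β) * (pr y * Real.log (pr y / pt y))
          + β * (pr y * Real.log (pr y / mu y)) + pr y * Real.log Z := by
      intro y
      rcases eq_or_lt_of_le (hpr0 y) with h0 | h0
      · simp [← h0]
      · have hpt : 0 < pt y := by
          rcases eq_or_lt_of_le (hpt0 y) with h1 | h1
          · exact absurd (hac y h1.symm) (by positivity)
          · exact h1
        have hmu : 0 < mu y := by
          rcases eq_or_lt_of_le (hmu0 y) with h1 | h1
          · exact absurd (hsupp y h1.symm) (by positivity)
          · exact h1
        have hmty : mt y = pt y ^ (1 - β) * mu y ^ β / Z := hmt y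
        have hnum : 0 < pt y ^ (1 - β) * mu y ^ β :=
          mul_pos (Real.rpow_pos_of_pos hpt _) (Real.rpow_pos_of_pos hmu _)
        have hmtpos : 0 < mt y := by rw [hmty]; positivity
        rw [Real.log_div (ne_of_gt h0) (ne_of_gt hmtpos),
          Real.log_div (ne_of_gt h0) (ne_of_gt hpt),
          Real.log_div (ne_of_gt h0) (ne_of_gt hmu), hmty,
          Real.log_div (ne_of_gt hnum) (ne_of_gt hZ),
          Real.log_mul (ne_of_gt (Real.rpow_pos_of_pos hpt _))
            (ne_of_gt (Real.rpow_pos_of_pos hmu _)),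
          Real.log_rpow hpt, Real.log_rpow hmu]
        ring
    unfold klDist
    calc ∑ y, pr y * Real.log (pr y / mt y)
        = ∑ y, ((1 - β) * (pr y * Real.log (pr y / pt y))
          + β * (pr y * Real.log (pr y / mu y)) + pr y * Real.log Z) :=
          Finset.sum_congr rfl fun y _ => key y
      _ = (1 - β) * (∑ y, pr y * Real.log (pr y / pt y))
          + β * (∑ y, pr y * Real.log (pr y / mu y)) + (∑ y, pr y) * Real.log Z := by
          rw [Finset.sum_add_distrib, Finset.sum_add_distrib, ← Finset.mul_sum,
            ← Finset.mul_sum, ← Finset.sum_mul]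
      _ = _ := by rw [hpr1]; try ring
  -- Identity B
  have identB : (1 - β) * klDist mt pt + β * klDist mt mu = -Real.log Z := by
    have key : ∀ y, (1 - β) * (mt y * Real.log (mt y / pt y))
        + β * (mt y * Real.log (mt y / mu y)) = -(mt y * Real.log Z) := by
      intro y
      rcases eq_or_lt_of_le (hmt0 y) with h0 | h0
      · simp [← h0]
      · have hmty : mt y = pt y ^ (1 - β) * mu y ^ β / Z := hmt y
        have hnum : 0 < pt y ^ (1 - β) * mu y ^ β := by
          rcases lt_or_ge 0 (pt y ^ (1 - β) * mu y ^ β) with h | h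
          · exact h
          · exfalso
            have h00 : pt y ^ (1 - β) * mu y ^ β = 0 :=
              le_antisymm h (mul_nonneg (Real.rpow_nonneg (hpt0 y) _)
                (Real.rpow_nonneg (hmu0 y) _))
            rw [hmty, h00, zero_div] at h0
            exact lt_irrefl _ h0
        have hmu : 0 < mu y := by
          rcases eq_or_lt_of_le (hmu0 y) with h1 | h1
          · rw [← h1, Real.zero_rpow (ne_of_gt hβ0), mul_zero] at hnum
            exact absurd hnum (lt_irrefl 0)
          · exact h1
        rcases eq_or_lt_of_le hβ1 with hb1 | hb1
        · -- β = 1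
          have h1b : (1 : ℝ) - β = 0 := by rw [hb1]; ring
          have hmtmu : mt y / mu y = 1 / Z := by
            rw [hmty, h1b, Real.rpow_zero, hb1, Real.rpow_one, one_mul]
            field_simp
            try ring
          rw [h1b, hb1, hmtmu, one_div, Real.log_inv]
          ring
        · -- β < 1
          have hpt : 0 < pt y := by
            rcases eq_or_lt_of_le (hpt0 y) with h1 | h1
            · rw [← h1, Real.zero_rpow (by intro hcc; linarith [hcc] : (1:ℝ) - β ≠ 0),
                zero_mul] at hnum
              exact absurd hnum (lt_irrefl 0)
            · exact h1
          have hmteq : mt y * Z = pt y ^ (1 - β) * mu y ^ β := by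
            rw [hmty]; field_simp
          have hlogmt : Real.log (mt y) = (1 - β) * Real.log (pt y)
              + β * Real.log (mu y) - Real.log Z := by
            have h3 : Real.log (mt y * Z) = Real.log (pt y ^ (1 - β) * mu y ^ β) := by
              rw [hmteq]
            rw [Real.log_mul (ne_of_gt h0) (ne_of_gt hZ),
              Real.log_mul (ne_of_gt (Real.rpow_pos_of_pos hpt _))
                (ne_of_gt (Real.rpow_pos_of_pos hmu _)),
              Real.log_rpow hpt, Real.log_rpow hmu] at h3
            linarith
          rw [Real.log_div (ne_of_gt h0) (ne_of_gt hpt),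
            Real.log_div (ne_of_gt h0) (ne_of_gt hmu), hlogmt]
          ring
    have hs : ∑ y, ((1 - β) * (mt y * Real.log (mt y / pt y))
        + β * (mt y * Real.log (mt y / mu y))) = ∑ y, -(mt y * Real.log Z) :=
      Finset.sum_congr rfl fun y _ => key y
    rw [Finset.sum_add_distrib, ← Finset.mul_sum, ← Finset.mul_sum] at hs
    have h2 : ∑ y, -(mt y * Real.log Z) = -Real.log Z := by
      rw [Finset.sum_neg_distrib, ← Finset.sum_mul, hmt1, one_mul]
    rw [h2] at hs
    exact hs
  have hpos : 0 ≤ (1 - β) * klDist mt pt := by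
    rcases eq_or_lt_of_le hβ1 with hb1 | hb1
    · rw [← hb1]; simp
    · apply mul_nonneg (by linarith)
      apply klDist_nonneg' mt pt hmt0 hmt1 hpt0 (le_of_eq hpt1)
      intro y hy
      rw [hmt y, hy, Real.zero_rpow (by intro hcc; linarith [hcc] : (1:ℝ) - β ≠ 0),
        zero_mul, zero_div]
  have hklmu : 0 ≤ klDist mt mu := by
    apply klDist_nonneg' mt mu hmt0 hmt1 hmu0 (le_of_eq hmu1)
    intro y hy
    rw [hmt y, hy, Real.zero_rpow (ne_of_gt hβ0), mul_zero, zero_div]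
  linarith

end Mixture

lemma sum_pi_succ {Z : Type} [Fintype Z] {n : ℕ} (g : (Fin (n + 1) → Z) → ℝ) :
    ∑ s, g s = ∑ z, ∑ s : Fin n → Z, g (Fin.cons z s) := by
  rw [← Equiv.sum_comp (Fin.consEquiv (fun _ => Z)) g, Fintype.sum_prod_type]
  rfl

lemma pathProb_cons (p : ℕ → X → Y → X → ℝ) (π : ℕ → X → Y → ℝ)
    (h : ℕ) (x : X) (m : ℕ) (x0 : X) (s : Fin (m + 1) → X) (y0 : Y) (a : Fin m → Y) :
    pathProb p π h x (m + 1) (Fin.cons x0 s) (Fin.cons y0 a)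
      = (if x0 = x then (1 : ℝ) else 0) * (π h x0 y0 * p h x0 y0 (s 0))
          * pathProb p π (h + 1) (s 0) m s a := by
  unfold pathProb
  rw [Fin.prod_univ_succ, if_pos rfl]
  simp only [Fin.cons_zero, Fin.castSucc_zero, Fin.cons_succ, Fin.succ_zero_eq_one,
    Fin.cons_one, Fin.val_zero, add_zero, Fin.val_succ, ← Fin.succ_castSucc]
  have harith : ∀ i : Fin m, h + (↑i + 1) = h + 1 + ↑i := fun i => by omega
  simp only [harith]
  ring

lemma traj_succ (p : ℕ → X → Y → X → ℝ) (π : ℕ → X → Y → ℝ)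
    (h : ℕ) (x : X) (m : ℕ) (φ : (Fin (m + 1 + 1) → X) → (Fin (m + 1) → Y) → ℝ) :
    ∑ s, ∑ a, pathProb p π h x (m + 1) s a * φ s a
      = ∑ y, ∑ x', π h x y * p h x y x' *
          ∑ s, ∑ a, pathProb p π (h + 1) x' m s a * φ (Fin.cons x s) (Fin.cons y a) := by
  rw [sum_pi_succ (g := fun s => ∑ a, pathProb p π h x (m + 1) s a * φ s a)]
  have step1 : ∀ x0 : X, ∀ s : Fin (m + 1) → X,
      (∑ a : Fin (m + 1) → Y, pathProb p π h x (m + 1) (Fin.cons x0 s) a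
        * φ (Fin.cons x0 s) a)
      = ∑ y0, ∑ a : Fin m → Y,
          (if x0 = x then (1 : ℝ) else 0) * (π h x0 y0 * p h x0 y0 (s 0))
            * pathProb p π (h + 1) (s 0) m s a * φ (Fin.cons x0 s) (Fin.cons y0 a) := by
    intro x0 s
    rw [sum_pi_succ (g := fun a => pathProb p π h x (m + 1) (Fin.cons x0 s) a
      * φ (Fin.cons x0 s) a)]
    exact Finset.sum_congr rfl fun y0 _ => Finset.sum_congr rfl fun a _ => by
      rw [pathProb_cons]
  -- collapse the x0 indicator
  have step2 : ∑ x0, ∑ s : Fin (m + 1) → X,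
      (∑ a : Fin (m + 1) → Y, pathProb p π h x (m + 1) (Fin.cons x0 s) a
        * φ (Fin.cons x0 s) a)
      = ∑ s : Fin (m + 1) → X, ∑ y0, ∑ a : Fin m → Y,
          (π h x y0 * p h x y0 (s 0))
            * pathProb p π (h + 1) (s 0) m s a * φ (Fin.cons x s) (Fin.cons y0 a) := by
    have : ∀ x0, ∑ s : Fin (m + 1) → X,
        (∑ a : Fin (m + 1) → Y, pathProb p π h x (m + 1) (Fin.cons x0 s) a
          * φ (Fin.cons x0 s) a)
        = (if x0 = x then (1 : ℝ) else 0) * ∑ s : Fin (m + 1) → X, ∑ y0, ∑ a : Fin m → Y,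
            (π h x0 y0 * p h x0 y0 (s 0))
              * pathProb p π (h + 1) (s 0) m s a * φ (Fin.cons x0 s) (Fin.cons y0 a) := by
      intro x0
      rw [Finset.mul_sum]
      refine Finset.sum_congr rfl fun s _ => ?_
      rw [step1 x0 s, Finset.mul_sum]
      refine Finset.sum_congr rfl fun y0 _ => ?_
      rw [Finset.mul_sum]
      refine Finset.sum_congr rfl fun a _ => by ring
    calc ∑ x0, ∑ s : Fin (m + 1) → X,
        (∑ a : Fin (m + 1) → Y, pathProb p π h x (m + 1) (Fin.cons x0 s) a
          * φ (Fin.cons x0 s) a)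
        = ∑ x0, if x0 = x then (∑ s : Fin (m + 1) → X, ∑ y0, ∑ a : Fin m → Y,
            (π h x0 y0 * p h x0 y0 (s 0))
              * pathProb p π (h + 1) (s 0) m s a * φ (Fin.cons x0 s) (Fin.cons y0 a)) else 0 := by
          refine Finset.sum_congr rfl fun x0 _ => ?_
          rw [this x0]
          by_cases hx : x0 = x <;> simp [hx]
      _ = _ := by rw [Finset.sum_ite_eq' Finset.univ x]; simp
  rw [step2]
  -- now introduce x' and reorder
  have step3 : ∀ s : Fin (m + 1) → X, ∀ y0 : Y, ∀ a : Fin m → Y,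
      (π h x y0 * p h x y0 (s 0)) * pathProb p π (h + 1) (s 0) m s a
        * φ (Fin.cons x s) (Fin.cons y0 a)
      = ∑ x', π h x y0 * p h x y0 x' * (pathProb p π (h + 1) x' m s a
          * φ (Fin.cons x s) (Fin.cons y0 a)) := by
    intro s y0 a
    have key : ∀ x', pathProb p π (h + 1) x' m s a
        = (if s 0 = x' then (1 : ℝ) else 0) * pathProb p π (h + 1) (s 0) m s a := by
      intro x'
      unfold pathProb
      by_cases hx : s 0 = x' <;> simp [hx]
    calc (π h x y0 * p h x y0 (s 0)) * pathProb p π (h + 1) (s 0) m s a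
          * φ (Fin.cons x s) (Fin.cons y0 a)
        = ∑ x', if s 0 = x' then π h x y0 * p h x y0 x' * (pathProb p π (h + 1) (s 0) m s a
            * φ (Fin.cons x s) (Fin.cons y0 a)) else 0 := by
          rw [Finset.sum_ite_eq Finset.univ (s 0)
            (fun x' => π h x y0 * p h x y0 x' * (pathProb p π (h + 1) (s 0) m s a
              * φ (Fin.cons x s) (Fin.cons y0 a)))]
          simp [mul_assoc]
      _ = _ := by
          refine Finset.sum_congr rfl fun x' _ => ?_
          rw [key x']
          by_cases hx : s 0 = x' <;> simp [hx] <;> ring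
  calc ∑ s : Fin (m + 1) → X, ∑ y0, ∑ a : Fin m → Y,
      (π h x y0 * p h x y0 (s 0))
        * pathProb p π (h + 1) (s 0) m s a * φ (Fin.cons x s) (Fin.cons y0 a)
      = ∑ s : Fin (m + 1) → X, ∑ y0, ∑ a : Fin m → Y, ∑ x',
          π h x y0 * p h x y0 x' * (pathProb p π (h + 1) x' m s a
            * φ (Fin.cons x s) (Fin.cons y0 a)) := by
        refine Finset.sum_congr rfl fun s _ => Finset.sum_congr rfl fun y0 _ =>
          Finset.sum_congr rfl fun a _ => ?_
        rw [step3 s y0 a]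
    _ = ∑ y0, ∑ x', ∑ s : Fin (m + 1) → X, ∑ a : Fin m → Y,
          π h x y0 * p h x y0 x' * (pathProb p π (h + 1) x' m s a
            * φ (Fin.cons x s) (Fin.cons y0 a)) := by
        calc ∑ s : Fin (m + 1) → X, ∑ y0, ∑ a : Fin m → Y, ∑ x',
            π h x y0 * p h x y0 x' * (pathProb p π (h + 1) x' m s a
              * φ (Fin.cons x s) (Fin.cons y0 a))
            = ∑ y0, ∑ s : Fin (m + 1) → X, ∑ a : Fin m → Y, ∑ x',
              π h x y0 * p h x y0 x' * (pathProb p π (h + 1) x' m s a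
                * φ (Fin.cons x s) (Fin.cons y0 a)) := Finset.sum_comm
          _ = ∑ y0, ∑ s : Fin (m + 1) → X, ∑ x', ∑ a : Fin m → Y,
              π h x y0 * p h x y0 x' * (pathProb p π (h + 1) x' m s a
                * φ (Fin.cons x s) (Fin.cons y0 a)) :=
              Finset.sum_congr rfl fun y0 _ => Finset.sum_congr rfl fun s _ =>
                Finset.sum_comm
          _ = ∑ y0, ∑ x', ∑ s : Fin (m + 1) → X, ∑ a : Fin m → Y,
              π h x y0 * p h x y0 x' * (pathProb p π (h + 1) x' m s a
                * φ (Fin.cons x s) (Fin.cons y0 a)) :=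
              Finset.sum_congr rfl fun y0 _ => Finset.sum_comm
    _ = _ := by
        refine Finset.sum_congr rfl fun y0 _ => Finset.sum_congr rfl fun x' _ => ?_
        rw [Finset.mul_sum]
        refine Finset.sum_congr rfl fun s _ => ?_
        rw [Finset.mul_sum]

lemma traj_zero (p : ℕ → X → Y → X → ℝ) (π : ℕ → X → Y → ℝ) (h : ℕ) (x : X)
    (φ : (Fin 1 → X) → (Fin 0 → Y) → ℝ) :
    ∑ s, ∑ a, pathProb p π h x 0 s a * φ s a = φ (fun _ => x) (fun i => i.elim0) := by
  rw [sum_pi_succ (g := fun s => ∑ a, pathProb p π h x 0 s a * φ s a)]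
  have key : ∀ z : X, ∑ s : Fin 0 → X, ∑ a : Fin 0 → Y,
      pathProb p π h x 0 (Fin.cons z s) a * φ (Fin.cons z s) a
      = if z = x then φ (fun _ => x) (fun i => i.elim0) else 0 := by
    intro z
    rw [Fintype.sum_unique, Fintype.sum_unique]
    have hfun : (Fin.cons z (default : Fin 0 → X)) = (fun _ : Fin 1 => z) := by
      funext i; exact Fin.cases rfl (fun j => j.elim0) i
    have ha : (default : Fin 0 → Y) = (fun i : Fin 0 => i.elim0) := by
      funext i; exact i.elim0
    rw [hfun, ha]
    unfold pathProb
    by_cases hz : z = x <;> simp [hz]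
  rw [Finset.sum_congr rfl fun z _ => key z, Finset.sum_ite_eq' Finset.univ x]
  simp

lemma pathProb_nonneg (p : ℕ → X → Y → X → ℝ) (π : ℕ → X → Y → ℝ)
    (hπ0 : ∀ h x y, 0 ≤ π h x y) (hp0 : ∀ h x y x', 0 ≤ p h x y x')
    (h : ℕ) (x : X) (m : ℕ) (s : Fin (m + 1) → X) (a : Fin m → Y) :
    0 ≤ pathProb p π h x m s a := by
  unfold pathProb
  apply mul_nonneg
  · split <;> norm_num
  · exact Finset.prod_nonneg fun i _ => mul_nonneg (hπ0 _ _ _) (hp0 _ _ _ _)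

lemma pathProb_pos_transfer (p : ℕ → X → Y → X → ℝ) (π ρ : ℕ → X → Y → ℝ)
    (hπ0 : ∀ h x y, 0 ≤ π h x y) (hp0 : ∀ h x y x', 0 ≤ p h x y x')
    (hρ0 : ∀ h x y, 0 ≤ ρ h x y)
    (hac : ∀ h x y, ρ h x y = 0 → π h x y = 0)
    (h : ℕ) (x : X) (m : ℕ) (s : Fin (m + 1) → X) (a : Fin m → Y)
    (hpos : 0 < pathProb p π h x m s a) : 0 < pathProb p ρ h x m s a := by
  unfold pathProb at hpos ⊢
  by_cases hs : s 0 = x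
  · rw [if_pos hs, one_mul] at hpos ⊢
    have hfac : ∀ i : Fin m,
        0 < π (h + i) (s i.castSucc) (a i) * p (h + i) (s i.castSucc) (a i) (s i.succ) := by
      intro i
      rcases (mul_nonneg (hπ0 _ _ _) (hp0 _ _ _ _)).lt_or_eq with hlt | heq
      · exact hlt
      · exfalso
        rw [Finset.prod_eq_zero (Finset.mem_univ i) heq.symm] at hpos
        exact lt_irrefl _ hpos
    apply Finset.prod_pos
    intro i _
    have h1 := hfac i
    have hπpos : 0 < π (h + i) (s i.castSucc) (a i) := by
      rcases mul_pos_iff.1 h1 with ⟨ha, _⟩ | ⟨ha, _⟩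
      · exact ha
      · exact absurd ha (not_lt.2 (hπ0 _ _ _))
    have hppos : 0 < p (h + i) (s i.castSucc) (a i) (s i.succ) := by
      rcases mul_pos_iff.1 h1 with ⟨_, hb⟩ | ⟨_, hb⟩
      · exact hb
      · exact absurd hb (not_lt.2 (hp0 _ _ _ _))
    apply mul_pos _ hppos
    rcases (hρ0 (h + i) (s i.castSucc) (a i)).lt_or_eq with hlt | heq
    · exact hlt
    · exact absurd (hac _ _ _ heq.symm) (ne_of_gt hπpos)
  · rw [if_neg hs, zero_mul] at hpos
    exact absurd hpos (lt_irrefl 0)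

lemma traj_mass (p : ℕ → X → Y → X → ℝ) (π : ℕ → X → Y → ℝ)
    (hπ1 : ∀ h x, ∑ y, π h x y = 1) (hp1 : ∀ h x y, ∑ x', p h x y x' = 1) :
    ∀ (m h : ℕ) (x : X), ∑ s : Fin (m + 1) → X, ∑ a : Fin m → Y, pathProb p π h x m s a = 1 := by
  intro m
  induction m with
  | zero =>
    intro h x
    have := traj_zero p π h x (fun _ _ => (1 : ℝ))
    simpa using this
  | succ m ih =>
    intro h x
    have := traj_succ p π h x m (fun _ _ => (1 : ℝ))
    simp only [mul_one] at this
    rw [this]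
    calc ∑ y, ∑ x', π h x y * p h x y x'
          * ∑ s : Fin (m + 1) → X, ∑ a : Fin m → Y, pathProb p π (h + 1) x' m s a
        = ∑ y, ∑ x', π h x y * p h x y x' := by
          refine Finset.sum_congr rfl fun y _ => Finset.sum_congr rfl fun x' _ => ?_
          rw [ih (h + 1) x', mul_one]
      _ = ∑ y, π h x y * ∑ x', p h x y x' := by
          refine Finset.sum_congr rfl fun y _ => ?_
          rw [Finset.mul_sum]
      _ = 1 := by
          rw [Finset.sum_congr rfl fun y (_ : y ∈ Finset.univ) => by rw [hp1 h x y, mul_one],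
            hπ1 h x]

noncomputable def KLg (p : ℕ → X → Y → X → ℝ) (π ρ : ℕ → X → Y → ℝ)
    (h m : ℕ) (x : X) : ℝ :=
  ∑ s : Fin (m + 1) → X, ∑ a : Fin m → Y,
    pathProb p π h x m s a *
      Real.log (pathProb p π h x m s a / pathProb p ρ h x m s a)

noncomputable def Vg (p : ℕ → X → Y → X → ℝ) (σ μ : ℕ → X → Y → ℝ) (r : X → ℝ)
    (α : ℝ) (h m : ℕ) (x : X) : ℝ :=
  ∑ s : Fin (m + 1) → X, ∑ a : Fin m → Y,
    pathProb p σ h x m s a *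
      (r (s (Fin.last m)) -
        α * ∑ i : Fin m, klDist (σ (h + i) (s i.castSucc)) (μ (h + i) (s i.castSucc)))

noncomputable def Eg (p : ℕ → X → Y → X → ℝ) (π : ℕ → X → Y → ℝ) (g : ℕ → X → ℝ)
    (h m : ℕ) (x : X) : ℝ :=
  ∑ s : Fin (m + 1) → X, ∑ a : Fin m → Y,
    pathProb p π h x m s a * ∑ i : Fin m, g (h + i) (s i.castSucc)

lemma KLg_zero (p : ℕ → X → Y → X → ℝ) (π ρ : ℕ → X → Y → ℝ) (h : ℕ) (x : X) :
    KLg p π ρ h 0 x = 0 := by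
  unfold KLg
  rw [traj_zero p π h x (fun s a => Real.log (pathProb p π h x 0 s a / pathProb p ρ h x 0 s a))]
  simp [pathProb]

lemma Vg_zero (p : ℕ → X → Y → X → ℝ) (σ μ : ℕ → X → Y → ℝ) (r : X → ℝ) (α : ℝ)
    (h : ℕ) (x : X) : Vg p σ μ r α h 0 x = r x := by
  unfold Vg
  rw [traj_zero p σ h x (fun s a => r (s (Fin.last 0)) -
    α * ∑ i : Fin 0, klDist (σ (h + i) (s i.castSucc)) (μ (h + i) (s i.castSucc)))]
  simp

lemma Eg_zero (p : ℕ → X → Y → X → ℝ) (π : ℕ → X → Y → ℝ) (g : ℕ → X → ℝ)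
    (h : ℕ) (x : X) : Eg p π g h 0 x = 0 := by
  unfold Eg
  rw [traj_zero p π h x (fun s a => ∑ i : Fin 0, g (h + i) (s i.castSucc))]
  simp

lemma Eg_succ (p : ℕ → X → Y → X → ℝ) (π : ℕ → X → Y → ℝ) (g : ℕ → X → ℝ)
    (hπ1 : ∀ h x, ∑ y, π h x y = 1) (hp1 : ∀ h x y, ∑ x', p h x y x' = 1)
    (h m : ℕ) (x : X) :
    Eg p π g h (m + 1) x = g h x + ∑ y, ∑ x', π h x y * p h x y x' * Eg p π g (h + 1) m x' := by
  unfold Eg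
  rw [traj_succ p π h x m (fun s a => ∑ i : Fin (m + 1), g (h + i) (s i.castSucc))]
  have hφ : ∀ s : Fin (m + 1) → X,
      ∑ i : Fin (m + 1), g (h + ↑i) ((Fin.cons x s : Fin (m + 2) → X) i.castSucc)
        = g h x + ∑ i : Fin m, g (h + 1 + ↑i) (s i.castSucc) := by
    intro s
    rw [Fin.sum_univ_succ]
    simp only [Fin.castSucc_zero, Fin.cons_zero, ← Fin.succ_castSucc, Fin.cons_succ,
      Fin.val_zero, add_zero, Fin.val_succ]
    have harith : ∀ i : Fin m, h + (↑i + 1) = h + 1 + ↑i := fun i => by omega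
    simp only [harith]
  have inner : ∀ (y : Y) (x' : X),
      (∑ s : Fin (m + 1) → X, ∑ a : Fin m → Y, pathProb p π (h + 1) x' m s a *
        ∑ i : Fin (m + 1), g (h + ↑i) ((Fin.cons x s : Fin (m + 2) → X) i.castSucc))
      = g h x + Eg p π g (h + 1) m x' := by
    intro y x'
    unfold Eg
    have expand : (∑ s : Fin (m + 1) → X, ∑ a : Fin m → Y, pathProb p π (h + 1) x' m s a *
          ∑ i : Fin (m + 1), g (h + ↑i) ((Fin.cons x s : Fin (m + 2) → X) i.castSucc))
        = (∑ s : Fin (m + 1) → X, ∑ a : Fin m → Y, pathProb p π (h + 1) x' m s a * g h x)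
          + ∑ s : Fin (m + 1) → X, ∑ a : Fin m → Y, pathProb p π (h + 1) x' m s a *
              ∑ i : Fin m, g (h + 1 + ↑i) (s i.castSucc) := by
      rw [← Finset.sum_add_distrib]
      refine Finset.sum_congr rfl fun s _ => ?_
      rw [← Finset.sum_add_distrib]
      refine Finset.sum_congr rfl fun a _ => ?_
      rw [hφ s]
      ring
    rw [expand]
    congr 1
    simp only [← Finset.sum_mul]
    rw [traj_mass p π hπ1 hp1 m (h + 1) x', one_mul]
  calc ∑ y, ∑ x', π h x y * p h x y x' *
        (∑ s : Fin (m + 1) → X, ∑ a : Fin m → Y, pathProb p π (h + 1) x' m s a *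
          ∑ i : Fin (m + 1), g (h + ↑i) ((Fin.cons x s : Fin (m + 2) → X) i.castSucc))
      = ∑ y, ∑ x', (π h x y * p h x y x' * g h x
          + π h x y * p h x y x' * Eg p π g (h + 1) m x') := by
        refine Finset.sum_congr rfl fun y _ => Finset.sum_congr rfl fun x' _ => ?_
        rw [inner y x']
        ring
    _ = (∑ y, ∑ x', π h x y * p h x y x') * g h x
        + ∑ y, ∑ x', π h x y * p h x y x' * Eg p π g (h + 1) m x' := by
        simp only [Finset.sum_add_distrib, ← Finset.sum_mul]
    _ = _ := by
        have hW : ∑ y, ∑ x', π h x y * p h x y x' = 1 := by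
          calc ∑ y, ∑ x', π h x y * p h x y x'
              = ∑ y, π h x y * ∑ x', p h x y x' := by
                refine Finset.sum_congr rfl fun y _ => ?_
                rw [Finset.mul_sum]
            _ = 1 := by
                rw [Finset.sum_congr rfl fun y (_ : y ∈ Finset.univ) =>
                  by rw [hp1 h x y, mul_one], hπ1 h x]
        rw [hW, one_mul]
        unfold Eg
        try rfl

lemma Vg_succ (p : ℕ → X → Y → X → ℝ) (σ μ : ℕ → X → Y → ℝ) (r : X → ℝ) (α : ℝ)
    (hσ1 : ∀ h x, ∑ y, σ h x y = 1) (hp1 : ∀ h x y, ∑ x', p h x y x' = 1)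
    (h m : ℕ) (x : X) :
    Vg p σ μ r α h (m + 1) x = -(α * klDist (σ h x) (μ h x))
      + ∑ y, ∑ x', σ h x y * p h x y x' * Vg p σ μ r α (h + 1) m x' := by
  unfold Vg
  rw [traj_succ p σ h x m (fun s a => r (s (Fin.last (m + 1))) -
    α * ∑ i : Fin (m + 1), klDist (σ (h + i) (s i.castSucc)) (μ (h + i) (s i.castSucc)))]
  have hφ : ∀ s : Fin (m + 1) → X,
      r ((Fin.cons x s : Fin (m + 2) → X) (Fin.last (m + 1))) -
        α * ∑ i : Fin (m + 1), klDist (σ (h + ↑i) ((Fin.cons x s : Fin (m + 2) → X) i.castSucc))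
          (μ (h + ↑i) ((Fin.cons x s : Fin (m + 2) → X) i.castSucc))
      = (r (s (Fin.last m)) - α * ∑ i : Fin m, klDist (σ (h + 1 + ↑i) (s i.castSucc))
          (μ (h + 1 + ↑i) (s i.castSucc))) - α * klDist (σ h x) (μ h x) := by
    intro s
    rw [Fin.sum_univ_succ]
    have hlast : (Fin.cons x s : Fin (m + 2) → X) (Fin.last (m + 1)) = s (Fin.last m) := by
      rw [← Fin.succ_last, Fin.cons_succ]
    simp only [Fin.castSucc_zero, Fin.cons_zero, ← Fin.succ_castSucc, Fin.cons_succ,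
      Fin.val_zero, add_zero, Fin.val_succ, hlast]
    have harith : ∀ i : Fin m, h + (↑i + 1) = h + 1 + ↑i := fun i => by omega
    simp only [harith]
    ring
  have inner : ∀ (y : Y) (x' : X),
      (∑ s : Fin (m + 1) → X, ∑ a : Fin m → Y, pathProb p σ (h + 1) x' m s a *
        (r ((Fin.cons x s : Fin (m + 2) → X) (Fin.last (m + 1))) -
          α * ∑ i : Fin (m + 1), klDist (σ (h + ↑i) ((Fin.cons x s : Fin (m + 2) → X) i.castSucc))
            (μ (h + ↑i) ((Fin.cons x s : Fin (m + 2) → X) i.castSucc))))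
      = Vg p σ μ r α (h + 1) m x' - α * klDist (σ h x) (μ h x) := by
    intro y x'
    have expand : (∑ s : Fin (m + 1) → X, ∑ a : Fin m → Y, pathProb p σ (h + 1) x' m s a *
        (r ((Fin.cons x s : Fin (m + 2) → X) (Fin.last (m + 1))) -
          α * ∑ i : Fin (m + 1), klDist (σ (h + ↑i) ((Fin.cons x s : Fin (m + 2) → X) i.castSucc))
            (μ (h + ↑i) ((Fin.cons x s : Fin (m + 2) → X) i.castSucc))))
        = (∑ s : Fin (m + 1) → X, ∑ a : Fin m → Y, pathProb p σ (h + 1) x' m s a *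
            (r (s (Fin.last m)) - α * ∑ i : Fin m, klDist (σ (h + 1 + ↑i) (s i.castSucc))
              (μ (h + 1 + ↑i) (s i.castSucc))))
          - ∑ s : Fin (m + 1) → X, ∑ a : Fin m → Y, pathProb p σ (h + 1) x' m s a *
              (α * klDist (σ h x) (μ h x)) := by
      rw [← Finset.sum_sub_distrib]
      refine Finset.sum_congr rfl fun s _ => ?_
      rw [← Finset.sum_sub_distrib]
      refine Finset.sum_congr rfl fun a _ => ?_
      rw [hφ s]
      ring
    rw [expand]
    congr 1
    simp only [← Finset.sum_mul]
    rw [traj_mass p σ hσ1 hp1 m (h + 1) x', one_mul]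
  calc ∑ y, ∑ x', σ h x y * p h x y x' *
        (∑ s : Fin (m + 1) → X, ∑ a : Fin m → Y, pathProb p σ (h + 1) x' m s a *
          (r ((Fin.cons x s : Fin (m + 2) → X) (Fin.last (m + 1))) -
            α * ∑ i : Fin (m + 1), klDist (σ (h + ↑i) ((Fin.cons x s : Fin (m + 2) → X) i.castSucc))
              (μ (h + ↑i) ((Fin.cons x s : Fin (m + 2) → X) i.castSucc))))
      = ∑ y, ∑ x', (σ h x y * p h x y x' * Vg p σ μ r α (h + 1) m x'
          - σ h x y * p h x y x' * (α * klDist (σ h x) (μ h x))) := by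
        refine Finset.sum_congr rfl fun y _ => Finset.sum_congr rfl fun x' _ => ?_
        rw [inner y x']
        ring
    _ = (∑ y, ∑ x', σ h x y * p h x y x' * Vg p σ μ r α (h + 1) m x')
        - (∑ y, ∑ x', σ h x y * p h x y x') * (α * klDist (σ h x) (μ h x)) := by
        simp only [Finset.sum_sub_distrib, ← Finset.sum_mul]
    _ = _ := by
        have hW : ∑ y, ∑ x', σ h x y * p h x y x' = 1 := by
          calc ∑ y, ∑ x', σ h x y * p h x y x'
              = ∑ y, σ h x y * ∑ x', p h x y x' := by
                refine Finset.sum_congr rfl fun y _ => ?_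
                rw [Finset.mul_sum]
            _ = 1 := by
                rw [Finset.sum_congr rfl fun y (_ : y ∈ Finset.univ) =>
                  by rw [hp1 h x y, mul_one], hσ1 h x]
        rw [hW, one_mul]
        unfold Vg
        ring

lemma KLg_succ (p : ℕ → X → Y → X → ℝ) (π ρ : ℕ → X → Y → ℝ)
    (hπ0 : ∀ h x y, 0 ≤ π h x y) (hp0 : ∀ h x y x', 0 ≤ p h x y x')
    (hρ0 : ∀ h x y, 0 ≤ ρ h x y)
    (hπ1 : ∀ h x, ∑ y, π h x y = 1) (hp1 : ∀ h x y, ∑ x', p h x y x' = 1)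
    (hac : ∀ h x y, ρ h x y = 0 → π h x y = 0)
    (h m : ℕ) (x : X) :
    KLg p π ρ h (m + 1) x = klDist (π h x) (ρ h x)
      + ∑ y, ∑ x', π h x y * p h x y x' * KLg p π ρ (h + 1) m x' := by
  unfold KLg
  rw [traj_succ p π h x m (fun s a =>
    Real.log (pathProb p π h x (m + 1) s a / pathProb p ρ h x (m + 1) s a))]
  have key : ∀ (y : Y) (x' : X) (s : Fin (m + 1) → X) (a : Fin m → Y),
      π h x y * p h x y x' * (pathProb p π (h + 1) x' m s a *
        Real.log (pathProb p π h x (m + 1) (Fin.cons x s) (Fin.cons y a)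
          / pathProb p ρ h x (m + 1) (Fin.cons x s) (Fin.cons y a)))
      = π h x y * p h x y x' * (pathProb p π (h + 1) x' m s a *
          (Real.log (π h x y / ρ h x y)
            + Real.log (pathProb p π (h + 1) x' m s a / pathProb p ρ (h + 1) x' m s a))) := by
    intro y x' s a
    by_cases hc0 : π h x y = 0
    · simp [hc0]
    · by_cases hd0 : p h x y x' = 0
      · simp [hd0]
      · by_cases hw0 : pathProb p π (h + 1) x' m s a = 0
        · simp [hw0]
        · have hcpos : 0 < π h x y := (hπ0 h x y).lt_of_ne (Ne.symm hc0)
          have hdpos : 0 < p h x y x' := (hp0 h x y x').lt_of_ne (Ne.symm hd0)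
          have hwpos : 0 < pathProb p π (h + 1) x' m s a :=
            (pathProb_nonneg p π hπ0 hp0 (h + 1) x' m s a).lt_of_ne (Ne.symm hw0)
          have hs0 : s 0 = x' := by
            by_contra hs
            apply hw0
            unfold pathProb
            rw [if_neg hs, zero_mul]
          have hρy : 0 < ρ h x y := by
            rcases (hρ0 h x y).lt_or_eq with hlt | heq
            · exact hlt
            · exact absurd (hac h x y heq.symm) hc0
          have hwρ : 0 < pathProb p ρ (h + 1) x' m s a :=
            pathProb_pos_transfer p π ρ hπ0 hp0 hρ0 hac (h + 1) x' m s a hwpos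
          have hPPπ : pathProb p π h x (m + 1) (Fin.cons x s) (Fin.cons y a)
              = π h x y * p h x y x' * pathProb p π (h + 1) x' m s a := by
            rw [pathProb_cons, if_pos rfl, one_mul, hs0]
          have hPPρ : pathProb p ρ h x (m + 1) (Fin.cons x s) (Fin.cons y a)
              = ρ h x y * p h x y x' * pathProb p ρ (h + 1) x' m s a := by
            rw [pathProb_cons, if_pos rfl, one_mul, hs0]
          have hratio : pathProb p π h x (m + 1) (Fin.cons x s) (Fin.cons y a)
              / pathProb p ρ h x (m + 1) (Fin.cons x s) (Fin.cons y a)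
              = (π h x y / ρ h x y) *
                (pathProb p π (h + 1) x' m s a / pathProb p ρ (h + 1) x' m s a) := by
            rw [hPPπ, hPPρ]
            field_simp
          rw [hratio, Real.log_mul (by positivity) (by positivity)]
  have inner : ∀ (y : Y) (x' : X),
      π h x y * p h x y x' * (∑ s : Fin (m + 1) → X, ∑ a : Fin m → Y,
        pathProb p π (h + 1) x' m s a *
          Real.log (pathProb p π h x (m + 1) (Fin.cons x s) (Fin.cons y a)
            / pathProb p ρ h x (m + 1) (Fin.cons x s) (Fin.cons y a)))
      = π h x y * p h x y x' * (Real.log (π h x y / ρ h x y) + KLg p π ρ (h + 1) m x') := by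
    intro y x'
    calc π h x y * p h x y x' * (∑ s : Fin (m + 1) → X, ∑ a : Fin m → Y,
          pathProb p π (h + 1) x' m s a *
            Real.log (pathProb p π h x (m + 1) (Fin.cons x s) (Fin.cons y a)
              / pathProb p ρ h x (m + 1) (Fin.cons x s) (Fin.cons y a)))
        = ∑ s : Fin (m + 1) → X, ∑ a : Fin m → Y, π h x y * p h x y x' *
            (pathProb p π (h + 1) x' m s a *
              Real.log (pathProb p π h x (m + 1) (Fin.cons x s) (Fin.cons y a)
                / pathProb p ρ h x (m + 1) (Fin.cons x s) (Fin.cons y a))) := by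
          rw [Finset.mul_sum]
          refine Finset.sum_congr rfl fun s _ => ?_
          rw [Finset.mul_sum]
      _ = ∑ s : Fin (m + 1) → X, ∑ a : Fin m → Y, π h x y * p h x y x' *
            (pathProb p π (h + 1) x' m s a *
              (Real.log (π h x y / ρ h x y)
                + Real.log (pathProb p π (h + 1) x' m s a / pathProb p ρ (h + 1) x' m s a))) :=
          Finset.sum_congr rfl fun s _ => Finset.sum_congr rfl fun a _ => key y x' s a
      _ = π h x y * p h x y x' * ∑ s : Fin (m + 1) → X, ∑ a : Fin m → Y,
            (pathProb p π (h + 1) x' m s a *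
              (Real.log (π h x y / ρ h x y)
                + Real.log (pathProb p π (h + 1) x' m s a / pathProb p ρ (h + 1) x' m s a))) := by
          rw [Finset.mul_sum]
          refine Finset.sum_congr rfl fun s _ => ?_
          rw [Finset.mul_sum]
      _ = _ := by
          congr 1
          have expand : ∀ (s : Fin (m + 1) → X) (a : Fin m → Y),
              pathProb p π (h + 1) x' m s a *
                (Real.log (π h x y / ρ h x y)
                  + Real.log (pathProb p π (h + 1) x' m s a / pathProb p ρ (h + 1) x' m s a))
              = pathProb p π (h + 1) x' m s a * Real.log (π h x y / ρ h x y)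
                + pathProb p π (h + 1) x' m s a *
                    Real.log (pathProb p π (h + 1) x' m s a / pathProb p ρ (h + 1) x' m s a) :=
            fun s a => by ring
          rw [Finset.sum_congr rfl fun s _ => Finset.sum_congr rfl fun a _ => expand s a]
          simp only [Finset.sum_add_distrib, ← Finset.sum_mul]
          rw [traj_mass p π hπ1 hp1 m (h + 1) x', one_mul]
          unfold KLg
          try rfl
  rw [Finset.sum_congr rfl fun y (_ : y ∈ Finset.univ) =>
    Finset.sum_congr rfl fun x' (_ : x' ∈ Finset.univ) => inner y x']
  have split : ∀ (y : Y) (x' : X),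
      π h x y * p h x y x' * (Real.log (π h x y / ρ h x y) + KLg p π ρ (h + 1) m x')
      = π h x y * p h x y x' * Real.log (π h x y / ρ h x y)
        + π h x y * p h x y x' * KLg p π ρ (h + 1) m x' := fun y x' => by ring
  rw [Finset.sum_congr rfl fun y (_ : y ∈ Finset.univ) =>
    Finset.sum_congr rfl fun x' (_ : x' ∈ Finset.univ) => split y x']
  simp only [Finset.sum_add_distrib]
  congr 1
  calc ∑ y, ∑ x', π h x y * p h x y x' * Real.log (π h x y / ρ h x y)
      = ∑ y, π h x y * Real.log (π h x y / ρ h x y) * ∑ x', p h x y x' := by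
        refine Finset.sum_congr rfl fun y _ => ?_
        rw [Finset.mul_sum]
        refine Finset.sum_congr rfl fun x' _ => ?_
        ring
    _ = klDist (π h x) (ρ h x) := by
        unfold klDist
        refine Finset.sum_congr rfl fun y _ => ?_
        rw [hp1 h x y, mul_one]

lemma Qreg_bridge (p : ℕ → X → Y → X → ℝ) (σ μ : ℕ → X → Y → ℝ) (r : X → ℝ) (α : ℝ)
    (H : ℕ) (hσ1 : ∀ h x, ∑ y, σ h x y = 1) (hp1 : ∀ h x y, ∑ x', p h x y x' = 1)
    (h : ℕ) (x : X) (y : Y) :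
    Qreg p σ μ r α H h x y = -(α * klDist (σ h x) (μ h x))
      + ∑ x', p h x y x' * Vg p σ μ r α (h + 1) (H - (h + 1)) x' := by
  unfold Qreg
  have inner : ∀ x' : X,
      (∑ s : Fin (H - (h + 1) + 1) → X, ∑ a : Fin (H - (h + 1)) → Y,
        pathProb p σ (h + 1) x' (H - (h + 1)) s a *
          (r (s (Fin.last (H - (h + 1)))) -
            α * (klDist (σ h x) (μ h x) +
              ∑ i : Fin (H - (h + 1)),
                klDist (σ (h + 1 + i) (s i.castSucc)) (μ (h + 1 + i) (s i.castSucc)))))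
      = Vg p σ μ r α (h + 1) (H - (h + 1)) x' - α * klDist (σ h x) (μ h x) := by
    intro x'
    have expand : (∑ s : Fin (H - (h + 1) + 1) → X, ∑ a : Fin (H - (h + 1)) → Y,
        pathProb p σ (h + 1) x' (H - (h + 1)) s a *
          (r (s (Fin.last (H - (h + 1)))) -
            α * (klDist (σ h x) (μ h x) +
              ∑ i : Fin (H - (h + 1)),
                klDist (σ (h + 1 + i) (s i.castSucc)) (μ (h + 1 + i) (s i.castSucc)))))
        = (∑ s : Fin (H - (h + 1) + 1) → X, ∑ a : Fin (H - (h + 1)) → Y,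
            pathProb p σ (h + 1) x' (H - (h + 1)) s a *
              (r (s (Fin.last (H - (h + 1)))) -
                α * ∑ i : Fin (H - (h + 1)),
                  klDist (σ (h + 1 + i) (s i.castSucc)) (μ (h + 1 + i) (s i.castSucc))))
          - ∑ s : Fin (H - (h + 1) + 1) → X, ∑ a : Fin (H - (h + 1)) → Y,
              pathProb p σ (h + 1) x' (H - (h + 1)) s a * (α * klDist (σ h x) (μ h x)) := by
      rw [← Finset.sum_sub_distrib]
      refine Finset.sum_congr rfl fun s _ => ?_
      rw [← Finset.sum_sub_distrib]
      refine Finset.sum_congr rfl fun a _ => ?_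
      ring
    rw [expand]
    congr 1
    simp only [← Finset.sum_mul]
    rw [traj_mass p σ hσ1 hp1 (H - (h + 1)) (h + 1) x', one_mul]
  rw [Finset.sum_congr rfl fun x' (_ : x' ∈ Finset.univ) => by rw [inner x']]
  have split : ∀ x' : X, p h x y x' *
      (Vg p σ μ r α (h + 1) (H - (h + 1)) x' - α * klDist (σ h x) (μ h x))
      = p h x y x' * Vg p σ μ r α (h + 1) (H - (h + 1)) x'
        - p h x y x' * (α * klDist (σ h x) (μ h x)) := fun x' => by ring
  rw [Finset.sum_congr rfl fun x' (_ : x' ∈ Finset.univ) => split x']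
  rw [Finset.sum_sub_distrib, ← Finset.sum_mul, hp1 h x y, one_mul]
  ring

/-- **Fundamental inequality of mixture mirror descent policy optimization
(Lemma E.7).** With the geometric mixture policy
`μ_t(y|x) ∝ π_t(y|x)^{1−ηα} μ(y|x)^{ηα}` and the update
`π_{t+1}(y|x) ∝ μ_t(y|x) exp(η Q_α^{μ_t,t}(x,y))`, for any policy `π`:
`KL_p(π‖π_{t+1}) ≤ (1 − ηα) KL_p(π‖π_t)
  + 2η² E_{π,p}[Σ_h ‖Q_α^{μ_t,t}(x_h,·)‖_∞²]
  + η (V_α^{μ_t,t}(x_1) − V_α^{π,t}(x_1))`. -/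
theorem mixture_md_fundamental_inequality
    (p : ℕ → X → Y → X → ℝ) (μ πt μt πnext π : ℕ → X → Y → ℝ) (r : X → ℝ)
    (α η : ℝ) (x1 : X) (H : ℕ)
    (hα : 0 < α) (hη : 0 < η) (hηα : η * α ≤ 1)
    (hr : ∀ x, 0 ≤ r x ∧ r x ≤ 1)
    (hp : (∀ h x y x', 0 ≤ p h x y x') ∧ ∀ h x y, ∑ x', p h x y x' = 1)
    (hμ : (∀ h x y, 0 ≤ μ h x y) ∧ ∀ h x, ∑ y, μ h x y = 1)
    (hπt : (∀ h x y, 0 ≤ πt h x y) ∧ ∀ h x, ∑ y, πt h x y = 1)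
    (hπ : (∀ h x y, 0 ≤ π h x y) ∧ ∀ h x, ∑ y, π h x y = 1)
    (hsupp : ∀ h x y, μ h x y = 0 → πt h x y = 0)
    (habs : ∀ h x y, πt h x y = 0 → π h x y = 0)
    (hmix : ∀ h x y, μt h x y =
      πt h x y ^ (1 - η * α) * μ h x y ^ (η * α) /
        ∑ y', πt h x y' ^ (1 - η * α) * μ h x y' ^ (η * α))
    (hnext : ∀ h x y, πnext h x y =
      μt h x y * Real.exp (η * Qreg p μt μ r α H h x y) /
        ∑ y', μt h x y' * Real.exp (η * Qreg p μt μ r α H h x y')) :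
    KLtraj p π πnext x1 H ≤
      (1 - η * α) * KLtraj p π πt x1 H +
        2 * η ^ 2 *
          (∑ s : Fin (H + 1) → X, ∑ a : Fin H → Y,
            pathProb p π 0 x1 H s a *
              ∑ h : Fin H, (⨆ y : Y, |Qreg p μt μ r α H h (s h.castSucc) y|) ^ 2) +
        η * (Vreg p μt μ r α H 0 x1 - Vreg p π μ r α H 0 x1) := by
  obtain ⟨hp0, hp1⟩ := hp
  obtain ⟨hμ0, hμ1⟩ := hμ
  obtain ⟨hπt0, hπt1⟩ := hπt
  obtain ⟨hπ0, hπ1⟩ := hπ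
  have hβ0 : 0 < η * α := mul_pos hη hα
  have hμtf := fun (h : ℕ) (x : X) => mixture_facts (η * α) hβ0 (πt h x) (μ h x) (μt h x)
    (fun y => hπt0 h x y) (hπt1 h x) (fun y => hμ0 h x y) (fun y => hsupp h x y)
    (fun y => hmix h x y)
  have hμt0 : ∀ h x y, 0 ≤ μt h x y := fun h x y => (hμtf h x).2.1 y
  have hμt1 : ∀ h x, ∑ y, μt h x y = 1 := fun h x => (hμtf h x).2.2
  have hacmt : ∀ h x y, μt h x y = 0 → πt h x y = 0 := by
    intro h x y hz
    rw [hmix h x y] at hz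
    rcases div_eq_zero_iff.mp hz with hnum | hden
    · rcases mul_eq_zero.mp hnum with h1 | h2
      · rcases eq_or_lt_of_le hηα with he | hlt
        · rw [he, sub_self, Real.rpow_zero] at h1
          exact absurd h1 one_ne_zero
        · have h1b : (1 : ℝ) - η * α ≠ 0 := by
            intro hc; linarith
          exact (Real.rpow_eq_zero (hπt0 h x y) h1b).mp h1
      · exact hsupp h x y ((Real.rpow_eq_zero (hμ0 h x y) (ne_of_gt hβ0)).mp h2)
    · exact absurd hden (ne_of_gt (hμtf h x).1)
  have hZq : ∀ h x, 0 < ∑ y', μt h x y' * Real.exp (η * Qreg p μt μ r α H h x y') :=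
    fun h x => sum_exp_pos (μt h x) _ (fun y => hμt0 h x y) (hμt1 h x)
  have hπnext0 : ∀ h x y, 0 ≤ πnext h x y := by
    intro h x y
    rw [hnext h x y]
    exact div_nonneg (mul_nonneg (hμt0 h x y) (Real.exp_pos _).le) (hZq h x).le
  have hacnext : ∀ h x y, πnext h x y = 0 → π h x y = 0 := by
    intro h x y hz
    rw [hnext h x y] at hz
    rcases div_eq_zero_iff.mp hz with hnum | hden
    · rcases mul_eq_zero.mp hnum with h1 | h2
      · exact habs h x y (hacmt h x y h1)
      · exact absurd h2 (ne_of_gt (Real.exp_pos _))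
    · exact absurd hden (ne_of_gt (hZq h x))
  set g : ℕ → X → ℝ := fun h' x' => (⨆ y : Y, |Qreg p μt μ r α H h' x' y|) ^ 2 with hg
  have main : ∀ (m h : ℕ) (x : X), h + m = H →
      KLg p π πnext h m x ≤ (1 - η * α) * KLg p π πt h m x + 2 * η ^ 2 * Eg p π g h m x
        + η * (Vg p μt μ r α h m x - Vg p π μ r α h m x) := by
    intro m
    induction m with
    | zero =>
      intro h x _
      rw [KLg_zero, KLg_zero, Eg_zero, Vg_zero, Vg_zero]
      simp
    | succ m ih =>
      intro h x hm
      have hH1 : H - (h + 1) = m := by omega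
      have hQ : ∀ y, Qreg p μt μ r α H h x y
          = -(α * klDist (μt h x) (μ h x))
            + ∑ x', p h x y x' * Vg p μt μ r α (h + 1) m x' := by
        intro y
        rw [Qreg_bridge p μt μ r α H hμt1 hp1 h x y, hH1]
      have hmd := md_step (μt h x) (π h x) (fun y => η * Qreg p μt μ r α H h x y)
        (fun y => hμt0 h x y) (hμt1 h x) (fun y => hπ0 h x y) (hπ1 h x)
        (fun y hy => habs h x y (hacmt h x y hy)) (πnext h x) (fun y => hnext h x y)
      have hsupeq : (⨆ y : Y, |η * Qreg p μt μ r α H h x y|)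
          = η * ⨆ y : Y, |Qreg p μt μ r α H h x y| := by
        rw [Real.mul_iSup_of_nonneg hη.le]
        exact iSup_congr fun y => by rw [abs_mul, abs_of_pos hη]
      rw [hsupeq] at hmd
      beta_reduce at hmd
      have hsq : 2 * (η * ⨆ y : Y, |Qreg p μt μ r α H h x y|) ^ 2 = 2 * η ^ 2 * g h x := by
        rw [hg]
        ring
      have hmx := mixture_step (η * α) hβ0 hηα (πt h x) (μ h x) (π h x) (μt h x)
        (fun y => hπt0 h x y) (hπt1 h x) (fun y => hμ0 h x y) (hμ1 h x)
        (fun y => hπ0 h x y) (hπ1 h x) (fun y => hsupp h x y) (fun y => habs h x y)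
        (fun y => hmix h x y)
      have hQsum : ∀ w : Y → ℝ, (∑ y, w y) = 1 →
          ∑ y, w y * Qreg p μt μ r α H h x y
          = -(α * klDist (μt h x) (μ h x))
            + ∑ y, w y * ∑ x', p h x y x' * Vg p μt μ r α (h + 1) m x' := by
        intro w hw
        calc ∑ y, w y * Qreg p μt μ r α H h x y
            = ∑ y, (w y * (-(α * klDist (μt h x) (μ h x)))
              + w y * ∑ x', p h x y x' * Vg p μt μ r α (h + 1) m x') := by
              refine Finset.sum_congr rfl fun y _ => ?_
              rw [hQ y]
              ring
          _ = (∑ y, w y) * (-(α * klDist (μt h x) (μ h x)))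
              + ∑ y, w y * ∑ x', p h x y x' * Vg p μt μ r α (h + 1) m x' := by
              simp only [Finset.sum_add_distrib, ← Finset.sum_mul]
          _ = _ := by
              rw [hw]
              ring
      have hE3 : ∑ y, (μt h x y - π h x y) * (η * Qreg p μt μ r α H h x y)
          = η * ((∑ y, μt h x y * ∑ x', p h x y x' * Vg p μt μ r α (h + 1) m x')
            - ∑ y, π h x y * ∑ x', p h x y x' * Vg p μt μ r α (h + 1) m x') := by
        have e1 : ∑ y, (μt h x y - π h x y) * (η * Qreg p μt μ r α H h x y)
            = η * ((∑ y, μt h x y * Qreg p μt μ r α H h x y)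
              - ∑ y, π h x y * Qreg p μt μ r α H h x y) := by
          calc ∑ y, (μt h x y - π h x y) * (η * Qreg p μt μ r α H h x y)
              = ∑ y, (η * (μt h x y * Qreg p μt μ r α H h x y)
                - η * (π h x y * Qreg p μt μ r α H h x y)) := by
                refine Finset.sum_congr rfl fun y _ => ?_
                ring
            _ = _ := by
                rw [Finset.sum_sub_distrib, ← Finset.mul_sum, ← Finset.mul_sum]
                ring
        rw [e1, hQsum (μt h x) (hμt1 h x), hQsum (π h x) (hπ1 h x)]
        ring
      have hKN := KLg_succ p π πnext hπ0 hp0 hπnext0 hπ1 hp1 hacnext h m x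
      have hKT := KLg_succ p π πt hπ0 hp0 hπt0 hπ1 hp1 habs h m x
      have hEG := Eg_succ p π g hπ1 hp1 h m x
      have hVA := Vg_succ p μt μ r α hμt1 hp1 h m x
      have hVB := Vg_succ p π μ r α hπ1 hp1 h m x
      have reshapeA : ∑ y, ∑ x', μt h x y * p h x y x' * Vg p μt μ r α (h + 1) m x'
          = ∑ y, μt h x y * ∑ x', p h x y x' * Vg p μt μ r α (h + 1) m x' := by
        refine Finset.sum_congr rfl fun y _ => ?_
        rw [Finset.mul_sum]
        exact Finset.sum_congr rfl fun x' _ => by ring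
      have reshapeB : ∑ y, ∑ x', π h x y * p h x y x' * Vg p π μ r α (h + 1) m x'
          = ∑ y, π h x y * ∑ x', p h x y x' * Vg p π μ r α (h + 1) m x' := by
        refine Finset.sum_congr rfl fun y _ => ?_
        rw [Finset.mul_sum]
        exact Finset.sum_congr rfl fun x' _ => by ring
      have reshapeC : ∑ y, ∑ x', π h x y * p h x y x' * Vg p μt μ r α (h + 1) m x'
          = ∑ y, π h x y * ∑ x', p h x y x' * Vg p μt μ r α (h + 1) m x' := by
        refine Finset.sum_congr rfl fun y _ => ?_
        rw [Finset.mul_sum]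
        exact Finset.sum_congr rfl fun x' _ => by ring
      have hIH : ∑ y, ∑ x', π h x y * p h x y x' * KLg p π πnext (h + 1) m x'
          ≤ (1 - η * α) * ∑ y, ∑ x', π h x y * p h x y x' * KLg p π πt (h + 1) m x'
            + 2 * η ^ 2 * ∑ y, ∑ x', π h x y * p h x y x' * Eg p π g (h + 1) m x'
            + η * ((∑ y, ∑ x', π h x y * p h x y x' * Vg p μt μ r α (h + 1) m x')
              - ∑ y, ∑ x', π h x y * p h x y x' * Vg p π μ r α (h + 1) m x') := by
        have step : ∀ y x', π h x y * p h x y x' * KLg p π πnext (h + 1) m x'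
            ≤ π h x y * p h x y x' * ((1 - η * α) * KLg p π πt (h + 1) m x'
              + 2 * η ^ 2 * Eg p π g (h + 1) m x'
              + η * (Vg p μt μ r α (h + 1) m x' - Vg p π μ r α (h + 1) m x')) :=
          fun y x' => mul_le_mul_of_nonneg_left (ih (h + 1) x' (by omega))
            (mul_nonneg (hπ0 h x y) (hp0 h x y x'))
        calc ∑ y, ∑ x', π h x y * p h x y x' * KLg p π πnext (h + 1) m x'
            ≤ ∑ y, ∑ x', π h x y * p h x y x' * ((1 - η * α) * KLg p π πt (h + 1) m x'
              + 2 * η ^ 2 * Eg p π g (h + 1) m x'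
              + η * (Vg p μt μ r α (h + 1) m x' - Vg p π μ r α (h + 1) m x')) :=
              Finset.sum_le_sum fun y _ => Finset.sum_le_sum fun x' _ => step y x'
          _ = _ := by
              have expand2 : ∀ (y : Y) (x' : X),
                  π h x y * p h x y x' * ((1 - η * α) * KLg p π πt (h + 1) m x'
                    + 2 * η ^ 2 * Eg p π g (h + 1) m x'
                    + η * (Vg p μt μ r α (h + 1) m x' - Vg p π μ r α (h + 1) m x'))
                  = (1 - η * α) * (π h x y * p h x y x' * KLg p π πt (h + 1) m x')
                    + 2 * η ^ 2 * (π h x y * p h x y x' * Eg p π g (h + 1) m x')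
                    + (η * (π h x y * p h x y x' * Vg p μt μ r α (h + 1) m x')
                      - η * (π h x y * p h x y x' * Vg p π μ r α (h + 1) m x')) :=
                fun y x' => by ring
              rw [Finset.sum_congr rfl fun y (_ : y ∈ Finset.univ) =>
                Finset.sum_congr rfl fun x' (_ : x' ∈ Finset.univ) => expand2 y x']
              simp only [Finset.sum_add_distrib, Finset.sum_sub_distrib, ← Finset.mul_sum]
              ring
      rw [← reshapeA, ← reshapeC] at hE3
      rw [hKN, hKT, hEG, hVA, hVB]
      linarith [hmd, hmx, hE3, hIH, hsq]
  have hfinal := main H 0 x1 (by omega)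
  have e1 : KLtraj p π πnext x1 H = KLg p π πnext 0 H x1 := rfl
  have e2 : KLtraj p π πt x1 H = KLg p π πt 0 H x1 := rfl
  have e3 : Vreg p μt μ r α H 0 x1 = Vg p μt μ r α 0 H x1 := rfl
  have e4 : Vreg p π μ r α H 0 x1 = Vg p π μ r α 0 H x1 := rfl
  have e5 : (∑ s : Fin (H + 1) → X, ∑ a : Fin H → Y,
        pathProb p π 0 x1 H s a *
          ∑ h : Fin H, (⨆ y : Y, |Qreg p μt μ r α H h (s h.castSucc) y|) ^ 2)
      = Eg p π g 0 H x1 := by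
    unfold Eg
    refine Finset.sum_congr rfl fun s _ => Finset.sum_congr rfl fun a _ => ?_
    congr 1
    refine Finset.sum_congr rfl fun i _ => ?_
    rw [hg]
    simp
  rw [e1, e2, e3, e4, e5]
  exact hfinal
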